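/- Let P be a set of n points in general position in the plane and let α₁, α₂ be real numbers with 0 < α₁ ≤ α₂ and α₁ + 2α₂ ≤ 1. Then there exist two points p₁ and p₂ in ℝ² such that (1) every closed halfplane containing at least one of p₁, p₂ contains at least α₁·n of the points of P, and (2) every closed halfplane containing both p₁ and p₂ contains at least α₂·n of the points of P. -/

import Mathlib

open Finset

abbrev E2 := EuclideanSpace ℝ (Fin 2)

noncomputable section

def cnt (P : Finset E2) (v : E2) (c : ℝ) : ℕ := (P.filter fun x => (inner ℝ v x : ℝ) ≤ c).card

lemma cnt_mono (P : Finset E2) (v : E2) {c c' : ℝ} (h : c ≤ c') : cnt P v c ≤ cnt P v c' := by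
  apply card_le_card
  intro x hx
  simp only [mem_filter] at *
  exact ⟨hx.1, hx.2.trans h⟩

def mset (P : Finset E2) (k : ℕ) (v : E2) : Finset ℝ :=
  (P.image fun p => (inner ℝ v p : ℝ)).filter fun c => k ≤ cnt P v c

lemma mset_nonempty {P : Finset E2} (hP : P.Nonempty) {k : ℕ} (hk : k ≤ P.card) (v : E2) :
    (mset P k v).Nonempty := by
  have hne : (P.image fun p => (inner ℝ v p : ℝ)).Nonempty := hP.image _
  refine ⟨(P.image fun p => (inner ℝ v p : ℝ)).max' hne, ?_⟩
  rw [mset, mem_filter]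
  refine ⟨max'_mem _ _, le_trans hk ?_⟩
  rw [cnt]
  apply card_le_card
  intro x hx
  rw [mem_filter]
  exact ⟨hx, le_max' _ _ (mem_image_of_mem _ hx)⟩

def mm (P : Finset E2) (k : ℕ) (v : E2) : ℝ :=
  if h : (mset P k v).Nonempty then (mset P k v).min' h else 0

lemma cnt_mm {P : Finset E2} (hP : P.Nonempty) {k : ℕ} (hk : k ≤ P.card) (v : E2) :
    k ≤ cnt P v (mm P k v) := by
  rw [mm, dif_pos (mset_nonempty hP hk v)]
  have := min'_mem _ (mset_nonempty hP hk v)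
  simp only [mset, mem_filter] at this
  exact this.2

lemma cnt_lt_of_lt {P : Finset E2} (hP : P.Nonempty) {k : ℕ} (hk : k ≤ P.card) (hk1 : 1 ≤ k)
    {v : E2} {c : ℝ} (hc : c < mm P k v) : cnt P v c < k := by
  by_contra hcon
  push_neg at hcon
  have hA : (P.filter fun x => (inner ℝ v x : ℝ) ≤ c).Nonempty := by
    rw [← card_pos]; simp only [cnt] at hcon; omega
  obtain ⟨a, ha, hmax⟩ := exists_max_image _ (fun x => (inner ℝ v x : ℝ)) hA
  have haP : a ∈ P := (mem_filter.mp ha).1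
  have hac : (inner ℝ v a : ℝ) ≤ c := (mem_filter.mp ha).2
  have hmem : (inner ℝ v a : ℝ) ∈ mset P k v := by
    rw [mset, mem_filter]
    refine ⟨mem_image_of_mem _ haP, le_trans hcon ?_⟩
    apply card_le_card
    intro x hx
    rw [mem_filter]
    exact ⟨(mem_filter.mp hx).1, hmax x hx⟩
  have : mm P k v ≤ (inner ℝ v a : ℝ) := by
    rw [mm, dif_pos (mset_nonempty hP hk v)]
    exact min'_le _ _ hmem
  linarith

lemma filter_lt_card {P : Finset E2} (hP : P.Nonempty) {k : ℕ} (hk : k ≤ P.card) (hk1 : 1 ≤ k)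
    (v : E2) : (P.filter fun x => (inner ℝ v x : ℝ) < mm P k v).card < k := by
  rcases (P.filter fun x => (inner ℝ v x : ℝ) < mm P k v).eq_empty_or_nonempty with h | h
  · rw [h]; simpa using (show 0 < k by omega)
  obtain ⟨a, ha, hmax⟩ := exists_max_image _ (fun x => (inner ℝ v x : ℝ)) h
  have hac : (inner ℝ v a : ℝ) < mm P k v := (mem_filter.mp ha).2
  calc (P.filter fun x => (inner ℝ v x : ℝ) < mm P k v).card
      ≤ cnt P v (inner ℝ v a : ℝ) := by
        apply card_le_card
        intro x hx
        rw [mem_filter]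
        exact ⟨(mem_filter.mp hx).1, hmax x hx⟩
    _ < k := cnt_lt_of_lt hP hk hk1 hac

lemma mm_mono {P : Finset E2} (hP : P.Nonempty) {k k' : ℕ} (hk1 : 1 ≤ k) (hkk : k ≤ k')
    (hk' : k' ≤ P.card) (v : E2) : mm P k v ≤ mm P k' v := by
  by_contra hcon
  push_neg at hcon
  have h1 := cnt_lt_of_lt hP (le_trans hkk hk') hk1 hcon
  have h2 := cnt_mm hP hk' v
  omega

abbrev E2' := EuclideanSpace ℝ (Fin 2)

lemma union3 (P G1 G2 G3 : Finset E2') (h : ∀ p ∈ P, p ∈ G1 ∨ p ∈ G2 ∨ p ∈ G3) :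
    P.card ≤ G1.card + G2.card + G3.card := by
  classical
  calc P.card ≤ (G1 ∪ G2 ∪ G3).card := by
        apply card_le_card
        intro p hp
        have := h p hp
        simp only [mem_union]
        tauto
    _ ≤ _ := le_trans (card_union_le _ _) (by have := card_union_le G1 G2; omega)

lemma med3 (a b c : ℝ) : ∃ y : ℝ, (min a b ≤ y ∧ y ≤ max a b) ∧ (min a c ≤ y ∧ y ≤ max a c)
    ∧ (min b c ≤ y ∧ y ≤ max b c) := by
  rcases le_total a b with h1 | h1 <;> rcases le_total b c with h2 | h2 <;>
    rcases le_total a c with h3 | h3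
  · exact ⟨b, by refine ⟨⟨?_,?_⟩,⟨?_,?_⟩,⟨?_,?_⟩⟩ <;> simp [min_le_iff, le_max_iff] <;> tauto⟩
  · exact ⟨b, by refine ⟨⟨?_,?_⟩,⟨?_,?_⟩,⟨?_,?_⟩⟩ <;> simp [min_le_iff, le_max_iff] <;> tauto⟩
  · exact ⟨c, by refine ⟨⟨?_,?_⟩,⟨?_,?_⟩,⟨?_,?_⟩⟩ <;> simp [min_le_iff, le_max_iff] <;> tauto⟩
  · exact ⟨a, by refine ⟨⟨?_,?_⟩,⟨?_,?_⟩,⟨?_,?_⟩⟩ <;> simp [min_le_iff, le_max_iff] <;> tauto⟩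
  · exact ⟨a, by refine ⟨⟨?_,?_⟩,⟨?_,?_⟩,⟨?_,?_⟩⟩ <;> simp [min_le_iff, le_max_iff] <;> tauto⟩
  · exact ⟨c, by refine ⟨⟨?_,?_⟩,⟨?_,?_⟩,⟨?_,?_⟩⟩ <;> simp [min_le_iff, le_max_iff] <;> tauto⟩
  · exact ⟨c, by refine ⟨⟨?_,?_⟩,⟨?_,?_⟩,⟨?_,?_⟩⟩ <;> simp [min_le_iff, le_max_iff] <;> tauto⟩
  · exact ⟨b, by refine ⟨⟨?_,?_⟩,⟨?_,?_⟩,⟨?_,?_⟩⟩ <;> simp [min_le_iff, le_max_iff] <;> tauto⟩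

lemma mul_between {t a b y : ℝ} (h1 : min a b ≤ y) (h2 : y ≤ max a b) :
    min (t * a) (t * b) ≤ t * y := by
  rcases le_total 0 t with ht | ht <;> rcases le_total a b with hab | hab <;>
    simp_all [min_def, max_def] <;> split_ifs <;> nlinarith

-- three halfplanes with small total defect share a point of P
lemma exists_mem_three {P : Finset E2'} (hP : P.Nonempty) {k1 k2 k3 : ℕ}
    (h1 : 1 ≤ k1) (h2 : 1 ≤ k2) (h3 : 1 ≤ k3)
    (hc1 : k1 ≤ P.card) (hc2 : k2 ≤ P.card) (hc3 : k3 ≤ P.card)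
    (hsum : k1 + k2 + k3 ≤ P.card + 2) (v1 v2 v3 : E2) :
    ∃ p ∈ P, mm P k1 v1 ≤ (inner ℝ v1 p : ℝ) ∧ mm P k2 v2 ≤ (inner ℝ v2 p : ℝ) ∧
      mm P k3 v3 ≤ (inner ℝ v3 p : ℝ) := by
  classical
  by_contra hcon
  push_neg at hcon
  have hsub : ∀ p ∈ P, p ∈ (P.filter fun x => (inner ℝ v1 x : ℝ) < mm P k1 v1) ∨
      p ∈ (P.filter fun x => (inner ℝ v2 x : ℝ) < mm P k2 v2) ∨
      p ∈ (P.filter fun x => (inner ℝ v3 x : ℝ) < mm P k3 v3) := by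
    intro p hp
    simp only [mem_filter]
    rcases le_or_gt (mm P k1 v1) (inner ℝ v1 p : ℝ) with ha | ha
    · rcases le_or_gt (mm P k2 v2) (inner ℝ v2 p : ℝ) with hb | hb
      · exact Or.inr (Or.inr ⟨hp, hcon p hp ha hb⟩)
      · exact Or.inr (Or.inl ⟨hp, hb⟩)
    · exact Or.inl ⟨hp, ha⟩
  have := union3 P _ _ _ hsub
  have g1 := filter_lt_card hP hc1 h1 v1
  have g2 := filter_lt_card hP hc2 h2 v2
  have g3 := filter_lt_card hP hc3 h3 v3
  omega

lemma exists_mem_two {P : Finset E2'} (hP : P.Nonempty) {k1 k2 : ℕ}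
    (h1 : 1 ≤ k1) (h2 : 1 ≤ k2) (hc1 : k1 ≤ P.card) (hc2 : k2 ≤ P.card)
    (hsum : k1 + k2 ≤ P.card + 1) (v1 v2 : E2) :
    ∃ p ∈ P, mm P k1 v1 ≤ (inner ℝ v1 p : ℝ) ∧ mm P k2 v2 ≤ (inner ℝ v2 p : ℝ) := by
  obtain ⟨p, hp, ha, hb, -⟩ := exists_mem_three hP h1 h2 le_rfl hc1 hc2 (hP.card_pos) (by omega) v1 v2 v1
  exact ⟨p, hp, ha, hb⟩

lemma inner2 (v x : E2) : (inner ℝ v x : ℝ) = v 0 * x 0 + v 1 * x 1 := by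
  simp [PiLp.inner_apply, Fin.sum_univ_two, RCLike.inner_apply, mul_comm]

def mkpt (a b : ℝ) : E2 := (WithLp.equiv 2 (Fin 2 → ℝ)).symm ![a, b]

lemma mkpt0 (a b : ℝ) : mkpt a b 0 = a := by simp [mkpt]
lemma mkpt1 (a b : ℝ) : mkpt a b 1 = b := by simp [mkpt]

lemma triple_side {ε : ℝ} (hε : ε = 1 ∨ ε = -1) {v1 v2 v3 : E2} {m1 m2 m3 : ℝ}
    (hs1 : ε * v1 0 ≤ 0) (hs2 : ε * v2 0 ≤ 0) (hs3 : ε * v3 0 ≤ 0)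
    (z12 z13 z23 : E2)
    (h12a : m1 ≤ (inner ℝ v1 z12 : ℝ)) (h12b : m2 ≤ (inner ℝ v2 z12 : ℝ))
    (h13a : m1 ≤ (inner ℝ v1 z13 : ℝ)) (h13b : m3 ≤ (inner ℝ v3 z13 : ℝ))
    (h23a : m2 ≤ (inner ℝ v2 z23 : ℝ)) (h23b : m3 ≤ (inner ℝ v3 z23 : ℝ)) :
    ∃ x : E2, m1 ≤ (inner ℝ v1 x : ℝ) ∧ m2 ≤ (inner ℝ v2 x : ℝ) ∧ m3 ≤ (inner ℝ v3 x : ℝ) := by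
  have hε2 : ε * ε = 1 := by rcases hε with h | h <;> rw [h] <;> norm_num
  set M : ℝ := max (-(ε * z12 0)) (max (-(ε * z13 0)) (-(ε * z23 0))) with hM
  set X : ℝ := -ε * M with hX
  -- key: shifting a witness horizontally to coordinate X only increases inner products
  have hkey : ∀ (v z : E2), ε * v 0 ≤ 0 → -(ε * z 0) ≤ M →
      v 0 * z 0 + v 1 * z 1 ≤ v 0 * X + v 1 * z 1 := by
    intro v z hv hz
    have h1 : (0:ℝ) ≤ (-(ε * v 0)) * (M + ε * z 0) := by
      apply mul_nonneg <;> linarith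
    have e1 : (-(ε * v 0)) * (M + ε * z 0) = -(ε * v 0) * M - (ε * ε) * (v 0 * z 0) := by ring
    rw [hε2] at e1
    have e2 : v 0 * X = -(ε * v 0) * M := by rw [hX]; ring
    linarith
  obtain ⟨y, ⟨hy1a, hy1b⟩, ⟨hy2a, hy2b⟩, ⟨hy3a, hy3b⟩⟩ := med3 (z12 1) (z13 1) (z23 1)
  refine ⟨mkpt X y, ?_, ?_, ?_⟩
  · have b1 : m1 ≤ v1 0 * X + v1 1 * (z12 1) := by
      rw [inner2] at h12a
      exact le_trans h12a (hkey v1 z12 hs1 (le_max_left _ _))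
    have b2 : m1 ≤ v1 0 * X + v1 1 * (z13 1) := by
      rw [inner2] at h13a
      exact le_trans h13a (hkey v1 z13 hs1 (le_trans (le_max_left _ _) (le_max_right _ _)))
    have hmb := mul_between (t := v1 1) hy1a hy1b
    rw [inner2, mkpt0, mkpt1]
    rcases min_le_iff.mp hmb with h | h <;> linarith
  · have b1 : m2 ≤ v2 0 * X + v2 1 * (z12 1) := by
      rw [inner2] at h12b
      exact le_trans h12b (hkey v2 z12 hs2 (le_max_left _ _))
    have b2 : m2 ≤ v2 0 * X + v2 1 * (z23 1) := by
      rw [inner2] at h23a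
      exact le_trans h23a (hkey v2 z23 hs2 (le_trans (le_max_right _ _) (le_max_right _ _)))
    have hmb := mul_between (t := v2 1) hy2a hy2b
    rw [inner2, mkpt0, mkpt1]
    rcases min_le_iff.mp hmb with h | h <;> linarith
  · have b1 : m3 ≤ v3 0 * X + v3 1 * (z13 1) := by
      rw [inner2] at h13b
      exact le_trans h13b (hkey v3 z13 hs3 (le_trans (le_max_left _ _) (le_max_right _ _)))
    have b2 : m3 ≤ v3 0 * X + v3 1 * (z23 1) := by
      rw [inner2] at h23b
      exact le_trans h23b (hkey v3 z23 hs3 (le_trans (le_max_right _ _) (le_max_right _ _)))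
    have hmb := mul_between (t := v3 1) hy3a hy3b
    rw [inner2, mkpt0, mkpt1]
    rcases min_le_iff.mp hmb with h | h <;> linarith

lemma fclosed (P : Finset E2) (k : ℕ) (v : E2) : IsClosed {x : E2 | mm P k v ≤ (inner ℝ v x : ℝ)} :=
  isClosed_le continuous_const (Continuous.inner continuous_const continuous_id)

lemma fconvex (P : Finset E2) (k : ℕ) (v : E2) : Convex ℝ {x : E2 | mm P k v ≤ (inner ℝ v x : ℝ)} :=
  convex_halfSpace_ge ⟨fun a b => inner_add_right _ _ _, fun a b => real_inner_smul_right _ _ _⟩ _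

lemma exists_deep (P : Finset E2) (hP : P.Nonempty) (k₁ k₂ : ℕ) (hk1 : 1 ≤ k₁) (h12 : k₁ ≤ k₂)
    (hk2n : k₂ ≤ P.card) (hsum : k₁ + 2 * k₂ ≤ P.card + 2) (ε : ℝ) (hε : ε = 1 ∨ ε = -1) :
    ∃ p : E2, ∀ v : E2, mm P k₁ v ≤ (inner ℝ v p : ℝ) ∧
      (ε * v 0 ≤ 0 → mm P k₂ v ≤ (inner ℝ v p : ℝ)) := by
  classical
  set κ : E2 → ℕ := fun v => if ε * v 0 ≤ 0 then k₂ else k₁ with hκ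
  set F : E2 → Set E2 := fun v => {x : E2 | mm P (κ v) v ≤ (inner ℝ v x : ℝ)} with hF
  have hκpos : ∀ v : E2, ε * v 0 ≤ 0 → κ v = k₂ := by
    intro v h; rw [hκ]; simp only [if_pos h]
  have hκneg : ∀ v : E2, ¬ (ε * v 0 ≤ 0) → κ v = k₁ := by
    intro v h; rw [hκ]; simp only [if_neg h]
  have hκ1 : ∀ v, 1 ≤ κ v := by
    intro v; rcases le_or_gt (ε * v 0) 0 with h | h
    · rw [hκpos v h]; omega
    · rw [hκneg v (not_le.mpr h)]; omega
  have hκn : ∀ v, κ v ≤ P.card := by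
    intro v; rcases le_or_gt (ε * v 0) 0 with h | h
    · rw [hκpos v h]; omega
    · rw [hκneg v (not_le.mpr h)]; omega
  have hκk2 : ∀ v, κ v ≤ k₂ := by
    intro v; rcases le_or_gt (ε * v 0) 0 with h | h
    · rw [hκpos v h]
    · rw [hκneg v (not_le.mpr h)]; omega
  have hFmem : ∀ (v x : E2), x ∈ F v ↔ mm P (κ v) v ≤ (inner ℝ v x : ℝ) := by
    intro v x; rw [hF]; rfl
  -- triple intersection property
  have trip : ∀ v1 v2 v3 : E2, ∃ x : E2, x ∈ F v1 ∧ x ∈ F v2 ∧ x ∈ F v3 := by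
    intro v1 v2 v3
    by_cases hall : ε * v1 0 ≤ 0 ∧ ε * v2 0 ≤ 0 ∧ ε * v3 0 ≤ 0
    · obtain ⟨hs1, hs2, hs3⟩ := hall
      have h2 : k₂ + k₂ ≤ P.card + 1 := by omega
      obtain ⟨z12, -, hz12a, hz12b⟩ := exists_mem_two hP (by omega) (by omega) hk2n hk2n h2 v1 v2
      obtain ⟨z13, -, hz13a, hz13b⟩ := exists_mem_two hP (by omega) (by omega) hk2n hk2n h2 v1 v3
      obtain ⟨z23, -, hz23a, hz23b⟩ := exists_mem_two hP (by omega) (by omega) hk2n hk2n h2 v2 v3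
      obtain ⟨x, hx1, hx2, hx3⟩ := triple_side hε hs1 hs2 hs3 z12 z13 z23
        hz12a hz12b hz13a hz13b hz23a hz23b
      refine ⟨x, ?_, ?_, ?_⟩ <;> rw [hFmem]
      · rwa [hκpos v1 hs1]
      · rwa [hκpos v2 hs2]
      · rwa [hκpos v3 hs3]
    · have hone : κ v1 = k₁ ∨ κ v2 = k₁ ∨ κ v3 = k₁ := by
        by_cases c1 : ε * v1 0 ≤ 0
        · by_cases c2 : ε * v2 0 ≤ 0
          · by_cases c3 : ε * v3 0 ≤ 0
            · exact absurd ⟨c1, c2, c3⟩ hall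
            · exact Or.inr (Or.inr (hκneg v3 c3))
          · exact Or.inr (Or.inl (hκneg v2 c2))
        · exact Or.inl (hκneg v1 c1)
      have hsum3 : κ v1 + κ v2 + κ v3 ≤ P.card + 2 := by
        have e1 := hκk2 v1; have e2 := hκk2 v2; have e3 := hκk2 v3
        rcases hone with h | h | h <;> omega
      obtain ⟨p, -, h1, h2, h3⟩ := exists_mem_three hP (hκ1 v1) (hκ1 v2) (hκ1 v3)
        (hκn v1) (hκn v2) (hκn v3) hsum3 v1 v2 v3
      exact ⟨p, h1, h2, h3⟩
  -- any at most 3 sets of the family intersect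
  have sub3 : ∀ I : Finset E2, I.card ≤ 3 → (⋂ v ∈ I, F v).Nonempty := by
    intro I hI
    have hmem : ∀ v : E2, v ∈ I ↔ v ∈ I.toList := by
      intro v; exact (Finset.mem_toList).symm
    have hlen : I.toList.length ≤ 3 := by rw [Finset.length_toList]; exact hI
    rcases hL : I.toList with _ | ⟨a, _ | ⟨b, _ | ⟨c, _ | ⟨d, t⟩⟩⟩⟩
    · obtain ⟨x, hx, -, -⟩ := trip 0 0 0
      refine ⟨x, Set.mem_iInter₂.mpr ?_⟩
      intro v hv
      rw [hmem, hL] at hv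
      simp at hv
    · obtain ⟨x, hx, -, -⟩ := trip a a a
      refine ⟨x, Set.mem_iInter₂.mpr ?_⟩
      intro v hv
      rw [hmem, hL] at hv
      rw [List.mem_singleton] at hv
      subst hv; exact hx
    · obtain ⟨x, hx1, hx2, -⟩ := trip a b b
      refine ⟨x, Set.mem_iInter₂.mpr ?_⟩
      intro v hv
      rw [hmem, hL] at hv
      rw [List.mem_cons, List.mem_singleton] at hv
      rcases hv with h | h <;> subst h <;> assumption
    · obtain ⟨x, hx1, hx2, hx3⟩ := trip a b c
      refine ⟨x, Set.mem_iInter₂.mpr ?_⟩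
      intro v hv
      rw [hmem, hL] at hv
      rw [List.mem_cons, List.mem_cons, List.mem_singleton] at hv
      rcases hv with h | h | h <;> subst h <;> assumption
    · rw [hL] at hlen; simp at hlen; omega
  have hfr : Module.finrank ℝ E2 = 2 := by simp
  -- all finite subfamilies intersect
  have hfin : ∀ s : Finset E2, (⋂ v ∈ s, F v).Nonempty := by
    intro s
    apply Convex.helly_theorem' (𝕜 := ℝ)
    · intro v _
      exact fconvex P (κ v) v
    · intro I _ hIcard
      rw [hfr] at hIcard
      exact sub3 I hIcard
  -- the box
  set Q : Set E2 := F (mkpt 1 0) ∩ F (mkpt (-1) 0) ∩ F (mkpt 0 1) ∩ F (mkpt 0 (-1)) with hQ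
  set B : ℝ := 1 + |mm P (κ (mkpt 1 0)) (mkpt 1 0)| + |mm P (κ (mkpt (-1) 0)) (mkpt (-1) 0)|
      + |mm P (κ (mkpt 0 1)) (mkpt 0 1)| + |mm P (κ (mkpt 0 (-1))) (mkpt 0 (-1))| with hB
  have hBpos : 0 < B := by rw [hB]; positivity
  have hcoord : ∀ x ∈ Q, |x 0| ≤ B ∧ |x 1| ≤ B := by
    intro x hx
    rw [hQ] at hx
    obtain ⟨⟨⟨h1, h2⟩, h3⟩, h4⟩ := hx
    rw [hFmem, inner2, mkpt0, mkpt1] at h1 h2 h3 h4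
    have a1 := neg_abs_le (mm P (κ (mkpt 1 0)) (mkpt 1 0))
    have a2 := neg_abs_le (mm P (κ (mkpt (-1) 0)) (mkpt (-1) 0))
    have a3 := neg_abs_le (mm P (κ (mkpt 0 1)) (mkpt 0 1))
    have a4 := neg_abs_le (mm P (κ (mkpt 0 (-1))) (mkpt 0 (-1)))
    rw [hB]
    constructor <;> rw [abs_le] <;> constructor <;>
      nlinarith [abs_nonneg (mm P (κ (mkpt 1 0)) (mkpt 1 0)),
        abs_nonneg (mm P (κ (mkpt (-1) 0)) (mkpt (-1) 0)),
        abs_nonneg (mm P (κ (mkpt 0 1)) (mkpt 0 1)),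
        abs_nonneg (mm P (κ (mkpt 0 (-1))) (mkpt 0 (-1)))]
  have hQsub : Q ⊆ Metric.closedBall (0 : E2) (2 * B) := by
    intro x hx
    obtain ⟨c0, c1⟩ := hcoord x hx
    rw [Metric.mem_closedBall, dist_zero_right, EuclideanSpace.norm_eq]
    rw [Fin.sum_univ_two]
    have h : Real.sqrt (‖x 0‖ ^ 2 + ‖x 1‖ ^ 2) ≤ Real.sqrt ((2 * B) ^ 2) := by
      apply Real.sqrt_le_sqrt
      rw [Real.norm_eq_abs, Real.norm_eq_abs]
      nlinarith [abs_nonneg (x 0), abs_nonneg (x 1)]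
    calc Real.sqrt (‖x 0‖ ^ 2 + ‖x 1‖ ^ 2) ≤ Real.sqrt ((2 * B) ^ 2) := h
      _ = 2 * B := Real.sqrt_sq (by linarith)
  have hQclosed : IsClosed Q := by
    rw [hQ, hF]
    exact (((fclosed P _ _).inter (fclosed P _ _)).inter (fclosed P _ _)).inter (fclosed P _ _)
  have hQcomp : IsCompact Q :=
    (isCompact_closedBall (0 : E2) (2 * B)).of_isClosed_subset hQclosed hQsub
  have hQconv : Convex ℝ Q := by
    rw [hQ, hF]
    exact (((fconvex P _ _).inter (fconvex P _ _)).inter (fconvex P _ _)).inter (fconvex P _ _)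
  -- all sets of the family (cut with the box) intersect
  have hmain : (⋂ v : E2, (F v ∩ Q)).Nonempty := by
    apply Convex.helly_theorem_compact' (𝕜 := ℝ)
    · intro v
      exact (fconvex P (κ v) v).inter hQconv
    · intro v
      exact hQcomp.inter_left (fclosed P (κ v) v)
    · intro I _
      obtain ⟨x, hx⟩ := hfin (I ∪ {mkpt 1 0, mkpt (-1) 0, mkpt 0 1, mkpt 0 (-1)})
      rw [Set.mem_iInter₂] at hx
      refine ⟨x, Set.mem_iInter₂.mpr ?_⟩
      intro v hv
      rw [hQ]
      refine ⟨hx v (by simp [Finset.mem_union, hv]), ⟨⟨?_, ?_⟩, ?_⟩, ?_⟩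
      · exact hx _ (by simp [Finset.mem_union, Finset.mem_insert])
      · exact hx _ (by simp [Finset.mem_union, Finset.mem_insert])
      · exact hx _ (by simp [Finset.mem_union, Finset.mem_insert])
      · exact hx _ (by simp [Finset.mem_union, Finset.mem_insert])
  obtain ⟨p, hp⟩ := hmain
  rw [Set.mem_iInter] at hp
  refine ⟨p, fun v => ?_⟩
  have hpv : mm P (κ v) v ≤ (inner ℝ v p : ℝ) := (hFmem v p).mp (hp v).1
  constructor
  · rcases le_or_gt (ε * v 0) 0 with h | h
    · rw [hκpos v h] at hpv
      exact le_trans (mm_mono hP hk1 h12 hk2n v) hpv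
    · rwa [hκneg v (not_le.mpr h)] at hpv
  · intro h
    rwa [hκpos v h] at hpv

/-- For any finite set `P` of `n` points in general position in the plane
and reals `0 < α₁ ≤ α₂` with `α₁ + 2α₂ ≤ 1`, there are two points `p₁, p₂ ∈ ℝ²` such that
every closed halfplane containing at least one of them contains at least `α₁·n` points of `P`
and every closed halfplane containing both contains at least `α₂·n` points of `P`. -/
theorem two_points_plane_general (n : ℕ) (P : Finset (EuclideanSpace ℝ (Fin 2)))
    (hcard : P.card = n)
    (hgp : ∀ p₁ ∈ P, ∀ p₂ ∈ P, ∀ p₃ ∈ P, p₁ ≠ p₂ → p₁ ≠ p₃ → p₂ ≠ p₃ →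
      ¬ Collinear ℝ ({p₁, p₂, p₃} : Set (EuclideanSpace ℝ (Fin 2))))
    (α₁ α₂ : ℝ) (h₁ : 0 < α₁) (h₁₂ : α₁ ≤ α₂) (hsum : α₁ + 2 * α₂ ≤ 1) :
    ∃ p₁ p₂ : EuclideanSpace ℝ (Fin 2),
      (∀ (v : EuclideanSpace ℝ (Fin 2)) (c : ℝ), v ≠ 0 →
        ((inner ℝ v p₁ : ℝ) ≤ c ∨ (inner ℝ v p₂ : ℝ) ≤ c) →
        α₁ * n ≤ (P.filter (fun x => (inner ℝ v x : ℝ) ≤ c)).card) ∧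
      (∀ (v : EuclideanSpace ℝ (Fin 2)) (c : ℝ), v ≠ 0 →
        (inner ℝ v p₁ : ℝ) ≤ c → (inner ℝ v p₂ : ℝ) ≤ c →
        α₂ * n ≤ (P.filter (fun x => (inner ℝ v x : ℝ) ≤ c)).card) := by
  classical
  rcases Nat.eq_zero_or_pos n with hn0 | hn
  · subst hn0
    refine ⟨0, 0, ?_, ?_⟩
    · intro v c _ _
      simp only [Nat.cast_zero, mul_zero]
      positivity
    · intro v c _ _ _
      simp only [Nat.cast_zero, mul_zero]
      positivity
  · have hP : P.Nonempty := by
      rw [← Finset.card_pos, hcard]; exact hn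
    have hnR : (0:ℝ) < n := by exact_mod_cast hn
    set k₁ : ℕ := ⌈α₁ * n⌉₊ with hk₁def
    set k₂ : ℕ := ⌈α₂ * n⌉₊ with hk₂def
    have hk1 : 1 ≤ k₁ := by
      rw [hk₁def]
      exact Nat.ceil_pos.mpr (by positivity)
    have h12 : k₁ ≤ k₂ := by
      rw [hk₁def, hk₂def]
      exact Nat.ceil_le_ceil (mul_le_mul_of_nonneg_right h₁₂ (le_of_lt hnR))
    have hα2n : α₂ * n ≤ n := by nlinarith
    have hk2n : k₂ ≤ P.card := by
      rw [hcard, hk₂def]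
      exact Nat.ceil_le.mpr (by exact_mod_cast hα2n)
    have hc1 : (k₁ : ℝ) < α₁ * n + 1 := Nat.ceil_lt_add_one (by positivity)
    have hc2 : (k₂ : ℝ) < α₂ * n + 1 := Nat.ceil_lt_add_one (by nlinarith)
    have hsumk : k₁ + 2 * k₂ ≤ P.card + 2 := by
      rw [hcard]
      have hR : (k₁ : ℝ) + 2 * k₂ < (n : ℝ) + 3 := by nlinarith
      have : k₁ + 2 * k₂ < n + 3 := by exact_mod_cast hR
      omega
    obtain ⟨p₁, hp₁⟩ := exists_deep P hP k₁ k₂ hk1 h12 hk2n hsumk 1 (Or.inl rfl)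
    obtain ⟨p₂, hp₂⟩ := exists_deep P hP k₁ k₂ hk1 h12 hk2n hsumk (-1) (Or.inr rfl)
    have hk1n : k₁ ≤ P.card := le_trans h12 hk2n
    refine ⟨p₁, p₂, ?_, ?_⟩
    · intro v c _ hor
      have hmc : mm P k₁ v ≤ c := by
        rcases hor with h | h
        · exact le_trans (hp₁ v).1 h
        · exact le_trans (hp₂ v).1 h
      have h1 : k₁ ≤ cnt P v c := le_trans (cnt_mm hP hk1n v) (cnt_mono P v hmc)
      have h2 : α₁ * n ≤ (k₁ : ℝ) := Nat.le_ceil _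
      calc α₁ * n ≤ (k₁ : ℝ) := h2
        _ ≤ (cnt P v c : ℝ) := by exact_mod_cast h1
        _ = _ := by rw [cnt]
    · intro v c _ ha hb
      have hmc : mm P k₂ v ≤ c := by
        rcases le_total (v 0) 0 with h | h
        · exact le_trans ((hp₁ v).2 (by linarith)) ha
        · exact le_trans ((hp₂ v).2 (by linarith)) hb
      have h1 : k₂ ≤ cnt P v c := le_trans (cnt_mm hP hk2n v) (cnt_mono P v hmc)
      have h2 : α₂ * n ≤ (k₂ : ℝ) := Nat.le_ceil _
      calc α₂ * n ≤ (k₂ : ℝ) := h2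
        _ ≤ (cnt P v c : ℝ) := by exact_mod_cast h1
        _ = _ := by rw [cnt]
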